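/- Let E = (C,V) be an approval election with candidates ordered so that app_E(c_1) ≥ ⋯ ≥ app_E(c_m), and committee size k < m with app_E(c_k) > app_E(c_{k+1}). Then the minimum number of single-approval additions needed to change the set of AV-winning size-k committees is exactly app_E(c_k) − app_E(c_{k+1}). -/

import Mathlib

open Finset

/-- Approval score of candidate `c`. -/
def appScore {V C : Type*} [Fintype V] [DecidableEq C]
    (A : V → Finset C) (c : C) : ℕ :=
  (Finset.univ.filter (fun v => c ∈ A v)).card

/-- AV score of a committee. -/
def avScore {V C : Type*} [Fintype V] [DecidableEq C]
    (A : V → Finset C) (S : Finset C) : ℕ :=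
  ∑ c ∈ S, appScore A c

/-- The set of AV-winning size-`k` committees. -/
def avWinners {V C : Type*} [Fintype V] [DecidableEq C]
    (A : V → Finset C) (k : ℕ) : Set (Finset C) :=
  {S | S.card = k ∧ ∀ T : Finset C, T.card = k → avScore A T ≤ avScore A S}

/-- `AddSeq n A A'`: `A'` is obtained from `A` by a sequence of `n` single-approval
additions. -/
def AddSeq {V C : Type*} [DecidableEq V] [DecidableEq C] :
    ℕ → (V → Finset C) → (V → Finset C) → Prop
  | 0, A, A' => A' = A
  | n + 1, A, A' => ∃ (A'' : V → Finset C) (v : V) (c : C),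
      AddSeq n A A'' ∧ c ∉ A'' v ∧ A' = Function.update A'' v (insert c (A'' v))

lemma appScore_update {V C : Type*} [Fintype V] [DecidableEq V] [DecidableEq C]
    (A : V → Finset C) (v : V) (c : C) (h : c ∉ A v) (c' : C) :
    appScore (Function.update A v (insert c (A v))) c' =
      appScore A c' + if c' = c then 1 else 0 := by
  unfold appScore
  by_cases hc : c' = c
  · subst hc
    rw [if_pos rfl]
    have heq : univ.filter (fun w => c' ∈ Function.update A v (insert c' (A v)) w)
        = insert v (univ.filter (fun w => c' ∈ A w)) := by
      ext w
      by_cases hw : w = v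
      · subst hw; simp [Function.update_self]
      · simp [Function.update_of_ne hw, hw]
    rw [heq, card_insert_of_notMem (by simp [h])]
  · rw [if_neg hc, add_zero]
    congr 1
    ext w
    by_cases hw : w = v
    · subst hw; simp [Function.update_self, hc]
    · simp [Function.update_of_ne hw]

lemma addSeq_score {V C : Type*} [Fintype V] [Fintype C] [DecidableEq V] [DecidableEq C] :
    ∀ (n : ℕ) (A A' : V → Finset C), AddSeq n A A' →
      (∀ c, appScore A c ≤ appScore A' c) ∧
      ∑ c, (appScore A' c - appScore A c) ≤ n := by
  intro n
  induction n with
  | zero =>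
    intro A A' h
    have h' : A' = A := h
    subst h'
    simp
  | succ n ih =>
    intro A A' h
    obtain ⟨A'', v, c, hseq, hc, rfl⟩ := h
    obtain ⟨hm, hs⟩ := ih A A'' hseq
    have hupd := appScore_update A'' v c hc
    constructor
    · intro c'
      rw [hupd c']
      exact le_trans (hm c') (Nat.le_add_right _ _)
    · have hterm : ∀ c', appScore (Function.update A'' v (insert c (A'' v))) c' - appScore A c'
          = (appScore A'' c' - appScore A c') + if c' = c then 1 else 0 := by
        intro c'; rw [hupd c']; have := hm c'; omega
      rw [Finset.sum_congr rfl (fun c' _ => hterm c'), Finset.sum_add_distrib]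
      have hone : (∑ c' : C, if c' = c then 1 else 0) = 1 := by simp
      omega

lemma core_bound {V C : Type*} [Fintype V] [Fintype C] [DecidableEq V] [DecidableEq C]
    (A : V → Finset C) (m : ℕ) (e : Fin m ≃ C)
    (hsort : ∀ i j : Fin m, i ≤ j → appScore A (e j) ≤ appScore A (e i))
    (k : ℕ) (hk0 : 0 < k) (hkm : k < m)
    (Top : Finset C) (hTop : Top = (Finset.Iio (⟨k, hkm⟩ : Fin m)).image e)
    (S : Finset C) (hS : S.card = k) :
    avScore A S + (S \ Top).card * appScore A (e ⟨k - 1, lt_of_le_of_lt (Nat.sub_le k 1) hkm⟩)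
      ≤ avScore A Top + (S \ Top).card * appScore A (e ⟨k, hkm⟩) := by
  have hTopcard : Top.card = k := by
    rw [hTop, card_image_of_injective _ e.injective, Fin.card_Iio]
  have hd := Finset.card_sdiff_comm (hS.trans hTopcard.symm)
  have h1 : ∑ c ∈ S \ Top, appScore A c ≤ (S \ Top).card * appScore A (e ⟨k, hkm⟩) := by
    rw [← smul_eq_mul]
    apply Finset.sum_le_card_nsmul
    intro c hc
    have hc' : c ∉ Top := (mem_sdiff.mp hc).2
    have hnlt : ¬ ((e.symm c : Fin m) < ⟨k, hkm⟩) := by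
      intro hlt
      exact hc' (hTop ▸ mem_image.mpr ⟨e.symm c, mem_Iio.mpr hlt, e.apply_symm_apply c⟩)
    have := hsort ⟨k, hkm⟩ (e.symm c) (not_lt.mp hnlt)
    rwa [e.apply_symm_apply] at this
  have h2 : (Top \ S).card * appScore A (e ⟨k - 1, lt_of_le_of_lt (Nat.sub_le k 1) hkm⟩)
      ≤ ∑ c ∈ Top \ S, appScore A c := by
    rw [← smul_eq_mul]
    apply Finset.card_nsmul_le_sum
    intro c hc
    have hcT : c ∈ Top := (mem_sdiff.mp hc).1
    rw [hTop] at hcT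
    obtain ⟨i, hi, rfl⟩ := mem_image.mp hcT
    have hi' : i.val < k := by
      have := mem_Iio.mp hi
      exact this
    exact hsort i ⟨k - 1, lt_of_le_of_lt (Nat.sub_le k 1) hkm⟩ (by
      rw [Fin.le_def]; simp; omega)
  have e1 : ∑ c ∈ S ∩ Top, appScore A c + ∑ c ∈ S \ Top, appScore A c = avScore A S :=
    Finset.sum_inter_add_sum_sdiff S Top _
  have e2 : ∑ c ∈ Top ∩ S, appScore A c + ∑ c ∈ Top \ S, appScore A c = avScore A Top :=
    Finset.sum_inter_add_sum_sdiff Top S _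
  rw [inter_comm] at e2
  rw [← hd] at h2
  linarith

lemma winners_singleton {V C : Type*} [Fintype V] [Fintype C] [DecidableEq V] [DecidableEq C]
    (A A' : V → Finset C) (m : ℕ) (e : Fin m ≃ C)
    (hsort : ∀ i j : Fin m, i ≤ j → appScore A (e j) ≤ appScore A (e i))
    (k : ℕ) (hk0 : 0 < k) (hkm : k < m)
    (hgap : appScore A (e ⟨k, hkm⟩) <
      appScore A (e ⟨k - 1, lt_of_le_of_lt (Nat.sub_le k 1) hkm⟩))
    (hmono : ∀ c, appScore A c ≤ appScore A' c)
    (hsum : ∑ c, (appScore A' c - appScore A c) <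
      appScore A (e ⟨k - 1, lt_of_le_of_lt (Nat.sub_le k 1) hkm⟩) - appScore A (e ⟨k, hkm⟩)) :
    avWinners A' k = {(Finset.Iio (⟨k, hkm⟩ : Fin m)).image e} := by
  set gck1 := appScore A (e ⟨k - 1, lt_of_le_of_lt (Nat.sub_le k 1) hkm⟩) with hgck1
  set gck := appScore A (e ⟨k, hkm⟩) with hgck
  set Top : Finset C := (Finset.Iio (⟨k, hkm⟩ : Fin m)).image e with hTop
  have hTopcard : Top.card = k := by
    rw [hTop, card_image_of_injective _ e.injective, Fin.card_Iio]
  have hAv : ∀ S : Finset C,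
      avScore A' S = avScore A S + ∑ c ∈ S, (appScore A' c - appScore A c) := by
    intro S
    unfold avScore
    rw [← Finset.sum_add_distrib]
    exact Finset.sum_congr rfl (fun c _ => by have := hmono c; omega)
  have hstrict : ∀ T : Finset C, T.card = k → T ≠ Top → avScore A' T < avScore A' Top := by
    intro T hT hne
    have hcore := core_bound A m e hsort k hk0 hkm Top hTop T hT
    have hdpos : 0 < (T \ Top).card := by
      rcases Nat.eq_zero_or_pos (T \ Top).card with h0 | h
      · exfalso
        apply hne
        apply Finset.eq_of_subset_of_card_le
        · rw [← sdiff_eq_empty_iff_subset]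
          exact card_eq_zero.mp h0
        · rw [hT, hTopcard]
      · exact h
    set d := (T \ Top).card
    have hmul : d * gck1 = d * gck + d * (gck1 - gck) := by
      rw [← Nat.mul_add]
      congr 1
      omega
    have hdgap : gck1 - gck ≤ d * (gck1 - gck) := Nat.le_mul_of_pos_left _ hdpos
    have hTbound : avScore A T + (gck1 - gck) ≤ avScore A Top := by linarith
    have hsub : ∑ c ∈ T, (appScore A' c - appScore A c)
        ≤ ∑ c, (appScore A' c - appScore A c) :=
      Finset.sum_le_sum_of_subset (subset_univ T)
    have h1 : avScore A' T < avScore A Top := by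
      rw [hAv T]; omega
    have h2 : avScore A Top ≤ avScore A' Top := by
      rw [hAv Top]; omega
    omega
  ext S
  simp only [avWinners, Set.mem_setOf_eq, Set.mem_singleton_iff]
  constructor
  · rintro ⟨hSc, hmax⟩
    by_contra hne
    exact absurd (hmax Top hTopcard) (not_le.mpr (hstrict S hSc hne))
  · rintro rfl
    refine ⟨hTopcard, fun T hT => ?_⟩
    by_cases hTe : T = Top
    · subst hTe; exact le_refl _
    · exact (hstrict T hT hTe).le

lemma addSeq_insert {V C : Type*} [Fintype V] [DecidableEq V] [DecidableEq C]
    (A : V → Finset C) (c : C) :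
    ∀ W : Finset V, (∀ v ∈ W, c ∉ A v) →
      AddSeq W.card A (fun v => if v ∈ W then insert c (A v) else A v) := by
  intro W
  induction W using Finset.induction_on with
  | empty =>
    intro _
    rw [card_empty]
    show (fun v => if v ∈ (∅ : Finset V) then insert c (A v) else A v) = A
    funext v; simp
  | @insert v W' hv ih =>
    intro hW
    rw [card_insert_of_notMem hv]
    refine ⟨fun w => if w ∈ W' then insert c (A w) else A w, v, c,
      ih (fun w hw => hW w (mem_insert_of_mem hw)), ?_, ?_⟩
    · simp only [hv, if_neg hv]
      exact hW v (mem_insert_self v W')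
    · funext w
      by_cases hwv : w = v
      · subst hwv
        rw [Function.update_self]
        simp [hv]
      · rw [Function.update_of_ne hwv]
        simp [mem_insert, hwv]

lemma appScore_insertW {V C : Type*} [Fintype V] [DecidableEq V] [DecidableEq C]
    (A : V → Finset C) (c : C) (W : Finset V)
    (hW : ∀ v ∈ W, c ∉ A v) (c' : C) :
    appScore (fun v => if v ∈ W then insert c (A v) else A v) c'
      = appScore A c' + if c' = c then W.card else 0 := by
  unfold appScore
  by_cases hc : c' = c
  · subst hc
    rw [if_pos rfl]
    have heq : univ.filter (fun v => c' ∈ (if v ∈ W then insert c' (A v) else A v))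
        = univ.filter (fun v => c' ∈ A v) ∪ W := by
      ext v
      by_cases hv : v ∈ W <;> simp [hv]
    rw [heq, card_union_of_disjoint]
    rw [disjoint_left]
    intro v hvf hvW
    exact hW v hvW (by simpa using hvf)
  · rw [if_neg hc, add_zero]
    congr 1
    ext v
    by_cases hv : v ∈ W <;> simp [hv, hc]

/-- if candidates are sorted by non-increasing approval score via `e`
and `app(c_k) > app(c_{k+1})`, then the minimum number of approval additions needed
to change the set of AV-winning size-`k` committees is exactly
`app(c_k) − app(c_{k+1})`. (With 1-based indexing, `c_k = e ⟨k-1,_⟩`, `c_{k+1} = e ⟨k,_⟩`.) -/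
theorem av_add_robustness_radius
    {V C : Type*} [Fintype V] [Fintype C] [DecidableEq V] [DecidableEq C]
    (A : V → Finset C) (m : ℕ) (hm : m = Fintype.card C) (e : Fin m ≃ C)
    (hsort : ∀ i j : Fin m, i ≤ j → appScore A (e j) ≤ appScore A (e i))
    (k : ℕ) (hk0 : 0 < k) (hkm : k < m)
    (hgap : appScore A (e ⟨k, hkm⟩) <
      appScore A (e ⟨k - 1, lt_of_le_of_lt (Nat.sub_le k 1) hkm⟩)) :
    (∃ A' : V → Finset C,
      AddSeq (appScore A (e ⟨k - 1, lt_of_le_of_lt (Nat.sub_le k 1) hkm⟩) -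
        appScore A (e ⟨k, hkm⟩)) A A' ∧ avWinners A' k ≠ avWinners A k) ∧
    (∀ n : ℕ, n < appScore A (e ⟨k - 1, lt_of_le_of_lt (Nat.sub_le k 1) hkm⟩) -
        appScore A (e ⟨k, hkm⟩) →
      ∀ A' : V → Finset C, AddSeq n A A' → avWinners A' k = avWinners A k) := by
  set ck1 := e ⟨k - 1, lt_of_le_of_lt (Nat.sub_le k 1) hkm⟩ with hck1def
  set ck := e ⟨k, hkm⟩ with hckdef
  set gap := appScore A ck1 - appScore A ck with hgapdef
  have hgappos : 0 < gap := by omega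
  set Top : Finset C := (Finset.Iio (⟨k, hkm⟩ : Fin m)).image e with hTop
  have hTopcard : Top.card = k := by
    rw [hTop, card_image_of_injective _ e.injective, Fin.card_Iio]
  have hAwin : avWinners A k = {Top} := by
    apply winners_singleton A A m e hsort k hk0 hkm hgap (fun c => le_refl _)
    rw [← hck1def, ← hckdef]
    have hz : ∑ c : C, (appScore A c - appScore A c) = 0 := by simp
    omega
  constructor
  · -- upper bound: construct A'
    have hVb : appScore A ck1 ≤ Fintype.card V := by
      unfold appScore
      exact le_trans (card_filter_le _ _) (le_of_eq card_univ)
    have hnot : gap ≤ (univ.filter (fun v => ck ∉ A v)).card := by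
      have hsplit : (univ.filter (fun v => ck ∈ A v)).card
          + (univ.filter (fun v => ck ∉ A v)).card = Fintype.card V := by
        rw [Finset.card_filter_add_card_filter_not, card_univ]
      have h1 : appScore A ck = (univ.filter (fun v => ck ∈ A v)).card := rfl
      omega
    obtain ⟨W, hWsub, hWcard⟩ := Finset.exists_subset_card_eq hnot
    have hWprop : ∀ v ∈ W, ck ∉ A v := by
      intro v hv
      have := hWsub hv
      simpa using (mem_filter.mp this).2
    refine ⟨fun v => if v ∈ W then insert ck (A v) else A v, ?_, ?_⟩
    · have := addSeq_insert A ck W hWprop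
      rwa [hWcard] at this
    · set A' := fun v => if v ∈ W then insert ck (A v) else A v with hA'
      have hscore : ∀ c', appScore A' c' = appScore A c' + if c' = ck then gap else 0 := by
        intro c'
        rw [hA', appScore_insertW A ck W hWprop c', hWcard]
      have hAvS : ∀ S : Finset C, avScore A' S = avScore A S + if ck ∈ S then gap else 0 := by
        intro S
        unfold avScore
        rw [Finset.sum_congr rfl (fun c _ => hscore c), Finset.sum_add_distrib]
        congr 1
        simp [Finset.sum_ite_eq']
      have hck1Top : ck1 ∈ Top := by
        rw [hTop]
        exact mem_image.mpr ⟨_, mem_Iio.mpr (by rw [Fin.mk_lt_mk]; omega), rfl⟩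
      have hckTop : ck ∉ Top := by
        rw [hTop]
        intro h
        obtain ⟨i, hi, hei⟩ := mem_image.mp h
        have : i = ⟨k, hkm⟩ := e.injective hei
        subst this
        exact absurd (mem_Iio.mp hi) (lt_irrefl _)
      set T : Finset C := insert ck (Top.erase ck1) with hT
      have hckE : ck ∉ Top.erase ck1 := fun h => hckTop (erase_subset _ _ h)
      have hTcard : T.card = k := by
        rw [hT, card_insert_of_notMem hckE, card_erase_of_mem hck1Top, hTopcard]
        omega
      have hTne : T ≠ Top := by
        intro h
        exact hckTop (h ▸ mem_insert_self ck _)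
      have hsumer : ∑ c ∈ Top.erase ck1, appScore A c + appScore A ck1 = avScore A Top := by
        exact Finset.sum_erase_add Top _ hck1Top
      have hAvT : avScore A' T = avScore A Top := by
        rw [hAvS T, hT]
        rw [if_pos (mem_insert_self _ _)]
        unfold avScore
        rw [Finset.sum_insert hckE]
        unfold avScore at hsumer
        omega
      have hTwin : T ∈ avWinners A' k := by
        refine ⟨hTcard, fun S hS => ?_⟩
        rw [hAvT, hAvS S]
        have hcore := core_bound A m e hsort k hk0 hkm Top hTop S hS
        by_cases hcks : ck ∈ S
        · rw [if_pos hcks]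
          have hdpos : 0 < (S \ Top).card :=
            card_pos.mpr ⟨ck, mem_sdiff.mpr ⟨hcks, hckTop⟩⟩
          set d := (S \ Top).card
          have hmul : d * appScore A ck1 = d * appScore A ck + d * gap := by
            rw [← Nat.mul_add]
            congr 1
            omega
          have hdgap : gap ≤ d * gap := Nat.le_mul_of_pos_left _ hdpos
          linarith
        · rw [if_neg hcks, add_zero]
          have hmle : (S \ Top).card * appScore A ck ≤ (S \ Top).card * appScore A ck1 :=
            Nat.mul_le_mul_left _ (le_of_lt hgap)
          linarith
      intro hEq
      rw [hEq, hAwin] at hTwin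
      exact hTne hTwin
  · -- lower bound
    intro n hn A' hAdd
    obtain ⟨hmono, hsum⟩ := addSeq_score n A A' hAdd
    have hA'win : avWinners A' k = {Top} := by
      apply winners_singleton A A' m e hsort k hk0 hkm hgap hmono
      rw [← hck1def, ← hckdef]
      omega
    rw [hA'win, hAwin]
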